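/- For all finite multisets u, v over N = {0,...,k} (possibly of different cardinalities), u ≺mmf v if and only if f(u) <lex f(v), where <lex on ℕ^{k+1} is the strict lexicographic order on vectors read from the first coordinate. -/

import Mathlib

/-- Strict lexicographic order on vectors `ℕ^{k+1}` read from the first
coordinate. -/
def VecLexLt {m : ℕ} (s t : Fin m → ℕ) : Prop :=
  ∃ j : Fin m, (∀ i, i < j → s i = t i) ∧ s j < t j

/-- `f(u) = (m_k, m_{k-1}, ..., m_0)`: the vector of multiplicities in `u` of
the elements `k, k-1, ..., 0`, listed from the largest element to the
smallest. -/
def multVec (k : ℕ) (u : Multiset ℕ) : Fin (k + 1) → ℕ :=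
  fun j => Multiset.count (k - (j : ℕ)) u

lemma lex_replicate_append (k m m' : ℕ) (l l' : List ℕ)
    (hl : ∀ a ∈ l, a < k) (hl' : ∀ a ∈ l', a < k) :
    List.Lex (· < ·) (List.replicate m k ++ l) (List.replicate m' k ++ l') ↔
      (m < m' ∨ (m = m' ∧ List.Lex (· < ·) l l')) := by
  induction m generalizing m' with
  | zero =>
    cases m' with
    | zero => simp
    | succ n =>
      simp only [List.replicate, List.nil_append, List.cons_append]
      constructor
      · intro _; left; omega
      · intro _
        cases l with
        | nil => exact List.Lex.nil
        | cons a t => exact List.Lex.rel (hl a (by simp))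
  | succ n ih =>
    cases m' with
    | zero =>
      simp only [List.replicate, List.nil_append, List.cons_append]
      constructor
      · intro h
        cases l' with
        | nil => cases h
        | cons a t =>
          cases h with
          | rel h => exact absurd h (by have := hl' a (by simp); omega)
          | cons h => exact absurd (hl' k (by simp)) (by omega)
      · rintro (h | ⟨h, _⟩) <;> omega
    | succ n' =>
      simp only [List.replicate, List.cons_append]
      rw [List.cons_lex_cons_iff, lt_self_iff_false, false_or, eq_self_iff_true, true_and, ih n', Nat.succ_lt_succ_iff, Nat.succ_inj]

lemma vecLexLt_succ_iff {n : ℕ} (s t : Fin (n + 1) → ℕ) :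
    VecLexLt s t ↔
      s 0 < t 0 ∨ (s 0 = t 0 ∧ VecLexLt (s ∘ Fin.succ) (t ∘ Fin.succ)) := by
  constructor
  · rintro ⟨j, hj, hlt⟩
    rcases Fin.eq_zero_or_eq_succ j with rfl | ⟨j', rfl⟩
    · exact Or.inl hlt
    · exact Or.inr ⟨hj 0 (Fin.succ_pos j'),
        j', fun i hi => hj i.succ (Fin.succ_lt_succ_iff.mpr hi), hlt⟩
  · rintro (h | ⟨h0, j, hj, hlt⟩)
    · exact ⟨0, fun i hi => absurd hi (Fin.not_lt_zero i), h⟩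
    · refine ⟨j.succ, fun i hi => ?_, hlt⟩
      rcases Fin.eq_zero_or_eq_succ i with rfl | ⟨i', rfl⟩
      · exact h0
      · exact hj i' (Fin.succ_lt_succ_iff.mp hi)

lemma not_vecLexLt_zero (s t : Fin 0 → ℕ) : ¬ VecLexLt s t := by
  rintro ⟨j, _⟩; exact j.elim0

lemma sorted_eq_replicate_append (k : ℕ) (l : List ℕ) (hs : l.Pairwise (· ≥ ·))
    (hl : ∀ a ∈ l, a ≤ k) :
    l = List.replicate (l.count k) k ++ l.filter (· ≠ k) := by
  induction l with
  | nil => simp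
  | cons a t ih =>
    rcases eq_or_lt_of_le (hl a (by simp)) with rfl | hak
    · have h1 : (a :: t).count a = t.count a + 1 := by simp
      have h2 : (a :: t).filter (· ≠ a) = t.filter (· ≠ a) := by simp
      rw [h1, h2, List.replicate_succ, List.cons_append]
      congr 1
      exact ih hs.of_cons (fun b hb => hl b (by simp [hb]))
    · have hkl : k ∉ a :: t := by
        intro hk
        rcases List.mem_cons.mp hk with rfl | hk
        · omega
        · have := (List.pairwise_cons.mp hs).1 k hk
          omega
      have h1 : (a :: t).count k = 0 := List.count_eq_zero.mpr hkl
      have h2 : (a :: t).filter (· ≠ k) = a :: t := by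
        rw [List.filter_eq_self]
        intro b hb
        simp only [ne_eq, decide_eq_true_eq]
        intro rfl'; subst rfl'; exact hkl hb
      rw [h1, h2]; rfl

lemma count_sort (a : ℕ) (u : Multiset ℕ) :
    (Multiset.sort u (· ≥ ·)).count a = Multiset.count a u := by
  conv_rhs => rw [← Multiset.sort_eq u (· ≥ ·)]
  rw [Multiset.coe_count]

lemma filter_sort (K : ℕ) (u : Multiset ℕ) :
    (Multiset.sort u (· ≥ ·)).filter (· ≠ K) =
      Multiset.sort (Multiset.filter (· ≠ K) u) (· ≥ ·) := by
  refine (fun h1 h2 h3 => List.Perm.eq_of_pairwise' (r := (· ≥ ·)) h2 h3 h1) ?_ ?_ ?_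
  · rw [← Multiset.coe_eq_coe, ← Multiset.filter_coe, Multiset.sort_eq,
      Multiset.sort_eq]
  · exact List.Pairwise.sublist List.filter_sublist (Multiset.pairwise_sort _ _)
  · exact Multiset.pairwise_sort _ _

/-- For all finite multisets `u, v` over `{0,...,k}` (possibly of different
cardinalities), `u ≺mmf v` iff `f(u) <lex f(v)`.  Here `u ≺mmf v` iff the
non-increasing listing of `u` is lexicographically strictly smaller than that
of `v` (`List.Lex (· < ·)`: a proper prefix is smaller, otherwise compare the
first differing entry). -/
theorem mmf_iff_multVec_lex (k : ℕ) (u v : Multiset ℕ)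
    (hu : ∀ a ∈ u, a ≤ k) (hv : ∀ a ∈ v, a ≤ k) :
    List.Lex (· < ·) (Multiset.sort u (· ≥ ·)) (Multiset.sort v (· ≥ ·)) ↔
      VecLexLt (multVec k u) (multVec k v) := by
  induction k generalizing u v with
  | zero =>
    have hL := sorted_eq_replicate_append 0 (Multiset.sort u (· ≥ ·))
      (Multiset.pairwise_sort _ _) (fun a ha => hu a (Multiset.mem_sort _ |>.mp ha))
    have hL' := sorted_eq_replicate_append 0 (Multiset.sort v (· ≥ ·))
      (Multiset.pairwise_sort _ _) (fun a ha => hv a (Multiset.mem_sort _ |>.mp ha))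
    rw [hL, hL', lex_replicate_append 0 _ _ _ _
      (fun a ha => absurd (Multiset.mem_sort _ |>.mp (List.mem_of_mem_filter ha))
        (by intro h; have := hu a h; have := (List.of_mem_filter ha); simp at this; omega))
      (fun a ha => absurd (Multiset.mem_sort _ |>.mp (List.mem_of_mem_filter ha))
        (by intro h; have := hv a h; have := (List.of_mem_filter ha); simp at this; omega))]
    rw [vecLexLt_succ_iff]
    have e0 : ∀ w : Multiset ℕ, multVec 0 w 0 = Multiset.count 0 w := fun w => rfl
    constructor
    · rintro (h | ⟨h, h2⟩)
      · left; rw [e0, e0, ← count_sort, ← count_sort]; exact h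
      · exfalso
        have hfu : (Multiset.sort u (· ≥ ·)).filter (· ≠ 0) = [] := by
          rw [List.filter_eq_nil_iff]
          intro a ha
          have := hu a (Multiset.mem_sort _ |>.mp ha)
          simp; omega
        have hfv : (Multiset.sort v (· ≥ ·)).filter (· ≠ 0) = [] := by
          rw [List.filter_eq_nil_iff]
          intro a ha
          have := hv a (Multiset.mem_sort _ |>.mp ha)
          simp; omega
        rw [hfu, hfv] at h2
        cases h2
    · rintro (h | ⟨h, h2⟩)
      · left; rw [e0, e0, ← count_sort, ← count_sort] at h; exact h
      · exact absurd h2 (not_vecLexLt_zero _ _)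
  | succ k ih =>
    set K := k + 1 with hK
    have hL := sorted_eq_replicate_append K (Multiset.sort u (· ≥ ·))
      (Multiset.pairwise_sort _ _) (fun a ha => hu a (Multiset.mem_sort _ |>.mp ha))
    have hL' := sorted_eq_replicate_append K (Multiset.sort v (· ≥ ·))
      (Multiset.pairwise_sort _ _) (fun a ha => hv a (Multiset.mem_sort _ |>.mp ha))
    have hflt : ∀ (w : Multiset ℕ), (∀ a ∈ w, a ≤ K) →
        ∀ a ∈ (Multiset.sort w (· ≥ ·)).filter (· ≠ K), a < K := by
      intro w hw a ha
      have h1 := hw a (Multiset.mem_sort _ |>.mp (List.mem_of_mem_filter ha))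
      have h2 := List.of_mem_filter ha
      simp at h2
      omega
    rw [hL, hL', lex_replicate_append K _ _ _ _ (hflt u hu) (hflt v hv),
      vecLexLt_succ_iff]
    have e0 : ∀ w : Multiset ℕ, multVec K w 0 = Multiset.count K w := by
      intro w; simp [multVec]
    have esucc : ∀ w : Multiset ℕ,
        (multVec K w) ∘ Fin.succ = multVec k (Multiset.filter (· ≠ K) w) := by
      intro w
      funext j
      simp only [Function.comp_apply, multVec, Fin.val_succ]
      have h1 : K - ((j : ℕ) + 1) = k - (j : ℕ) := by omega
      have h2 : k - (j : ℕ) ≠ K := by omega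
      rw [h1, Multiset.count_filter, if_pos h2]
    rw [count_sort, count_sort, filter_sort, filter_sort, e0, e0, esucc, esucc,
      ih (Multiset.filter (· ≠ K) u) (Multiset.filter (· ≠ K) v)
        (fun a ha => by
          have h3 := Multiset.mem_filter.mp ha
          have := hu a h3.1
          have := h3.2
          omega)
        (fun a ha => by
          have h3 := Multiset.mem_filter.mp ha
          have := hv a h3.1
          have := h3.2
          omega)]
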